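/- For formal power series A(x,y), B(x,y) satisfying A = xΦ(B) and B = yΨ(A) with given one-variable series Φ, Ψ, and for nonnegative integers α, β and positive integers n, m: [x^n y^m] A^α B^β = (1 − (n−α)(m−β)/(nm)) · [t^{m−β}]Φ^n(t) · [s^{n−α}]Ψ^m(s). -/

import Mathlib

/-- The composition `Φ(B) = ∑ₖ (coeff k Φ) Bᵏ` of a one-variable power series
`Φ` with a multivariate power series `B` having zero constant coefficient,
given coefficientwise (only `k ≤ |d|` contributes to the coefficient of the
monomial `d` when the constant coefficient of `B` vanishes). -/
noncomputable def phiComp {m : ℕ} (Φ : PowerSeries ℚ) (B : MvPowerSeries (Fin m) ℚ) :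
    MvPowerSeries (Fin m) ℚ :=
  fun d => ∑ k ∈ Finset.range ((d.sum fun _ v => v) + 1),
    PowerSeries.coeff k Φ * MvPowerSeries.coeff d (B ^ k)

/-- coefficient extraction at an integer index (zero at negative indices). -/
noncomputable def coeffZ (k : ℤ) (f : PowerSeries ℚ) : ℚ :=
  if 0 ≤ k then PowerSeries.coeff k.toNat f else 0

namespace Chottin

open Finset

/-- total degree of an exponent vector -/
def deg (d : Fin 2 →₀ ℕ) : ℕ := d.sum fun _ v => v

lemma deg_eq (d : Fin 2 →₀ ℕ) : deg d = d 0 + d 1 := by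
  rw [deg, Finsupp.sum_fintype _ _ (fun _ => rfl), Fin.sum_univ_two]

lemma deg_add (a b : Fin 2 →₀ ℕ) : deg (a + b) = deg a + deg b := by
  simp [deg_eq, Finsupp.add_apply]; ring

lemma one_le_deg {d : Fin 2 →₀ ℕ} (h : d ≠ 0) : 1 ≤ deg d := by
  rcases Nat.eq_zero_or_pos (deg d) with h0 | h0
  · exfalso; apply h
    rw [deg_eq] at h0
    ext i
    fin_cases i <;> simp <;> omega
  · exact h0

/-- the exponent vector xⁿyᵐ -/
noncomputable def e (n m : ℕ) : Fin 2 →₀ ℕ := Finsupp.single 0 n + Finsupp.single 1 m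

lemma e_apply_zero (n m : ℕ) : e n m 0 = n := by
  simp [e, Finsupp.single_apply]

lemma e_apply_one (n m : ℕ) : e n m 1 = m := by
  simp [e, Finsupp.single_apply]

lemma deg_e (n m : ℕ) : deg (e n m) = n + m := by
  rw [deg_eq, e_apply_zero, e_apply_one]

lemma e_le_e {a b n m : ℕ} : e a b ≤ e n m ↔ a ≤ n ∧ b ≤ m := by
  constructor
  · intro h
    exact ⟨by simpa [e_apply_zero] using h 0, by simpa [e_apply_one] using h 1⟩
  · rintro ⟨h1, h2⟩ i
    fin_cases i
    · simpa [e_apply_zero] using h1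
    · simpa [e_apply_one] using h2

lemma e_sub_e {a b n m : ℕ} : e n m - e a b = e (n - a) (m - b) := by
  ext i
  fin_cases i
  · simp [Finsupp.tsub_apply, e_apply_zero]
  · simp [Finsupp.tsub_apply, e_apply_one]

lemma e_eq_zero_iff {n m : ℕ} : e n m = 0 ↔ n = 0 ∧ m = 0 := by
  constructor
  · intro h
    constructor
    · have := congrArg (fun f : Fin 2 →₀ ℕ => f 0) h; simpa [e_apply_zero] using this
    · have := congrArg (fun f : Fin 2 →₀ ℕ => f 1) h; simpa [e_apply_one] using this
  · rintro ⟨rfl, rfl⟩; ext i; fin_cases i <;> simp [e_apply_zero, e_apply_one]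


lemma triangle (K : ℕ) (f : ℕ → ℕ → ℚ) (hf : ∀ k j, K ≤ k + j → f k j = 0) :
    ∑ k ∈ range K, ∑ j ∈ range K, f k j
      = ∑ r ∈ range K, ∑ p ∈ Finset.HasAntidiagonal.antidiagonal r, f p.1 p.2 := by
  have h1 : ∀ k ∈ range K, ∑ j ∈ range K, f k j = ∑ j ∈ range (K - k), f k j := by
    intro k hk
    refine (Finset.sum_subset (range_subset_range.2 (Nat.sub_le _ _)) ?_).symm
    intro j hj hj'
    refine hf k j ?_
    simp only [mem_range] at hj hj'
    omega
  rw [Finset.sum_congr rfl h1]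
  have h2 : ∀ r ∈ range K, ∑ p ∈ Finset.HasAntidiagonal.antidiagonal r, f p.1 p.2
      = ∑ k ∈ range (r + 1), f k (r - k) :=
    fun r _ => Finset.Nat.sum_antidiagonal_eq_sum_range_succ_mk _ r
  rw [Finset.sum_congr rfl h2]
  have h3 : ∀ k ∈ range K, ∑ j ∈ range (K - k), f k j = ∑ r ∈ Ico k K, f k (r - k) := by
    intro k _
    rw [Finset.sum_Ico_eq_sum_range]
    refine Finset.sum_congr rfl fun j _ => ?_
    congr 1
    omega
  rw [Finset.sum_congr rfl h3, Finset.range_eq_Ico,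
    Finset.sum_Ico_Ico_comm 0 K (fun k r => f k (r - k))]
  simp only [Finset.range_eq_Ico]

section Main

variable {A B : MvPowerSeries (Fin 2) ℚ} {Φ Ψ : PowerSeries ℚ}

lemma coeff_pow_eq_zero (hB : MvPowerSeries.constantCoeff B = 0) :
    ∀ (k : ℕ) (d : Fin 2 →₀ ℕ), deg d < k → MvPowerSeries.coeff d (B ^ k) = 0 := by
  intro k
  induction k with
  | zero => intro d h; exact absurd h (Nat.not_lt_zero _)
  | succ k ih =>
    intro d h
    rw [pow_succ', MvPowerSeries.coeff_mul]
    apply Finset.sum_eq_zero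
    intro p hp
    rw [Finset.HasAntidiagonal.mem_antidiagonal] at hp
    by_cases h1 : p.1 = 0
    · have : MvPowerSeries.coeff p.1 B = 0 := by
        rw [h1, MvPowerSeries.coeff_zero_eq_constantCoeff]; exact hB
      rw [this, zero_mul]
    · have hd : deg p.2 < k := by
        have h2 := one_le_deg h1
        have h3 : deg p.1 + deg p.2 = deg d := by rw [← deg_add, hp]
        omega
      rw [ih p.2 hd, mul_zero]

lemma coeff_pow_mul_eq_zero (hB : MvPowerSeries.constantCoeff B = 0)
    (G : MvPowerSeries (Fin 2) ℚ) {k : ℕ} {d : Fin 2 →₀ ℕ} (h : deg d < k) :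
    MvPowerSeries.coeff d (B ^ k * G) = 0 := by
  rw [MvPowerSeries.coeff_mul]
  apply Finset.sum_eq_zero
  intro p hp
  rw [Finset.HasAntidiagonal.mem_antidiagonal] at hp
  have h3 : deg p.1 + deg p.2 = deg d := by rw [← deg_add, hp]
  rw [coeff_pow_eq_zero hB k p.1 (by omega), zero_mul]

lemma coeff_phiComp_mul (hB : MvPowerSeries.constantCoeff B = 0)
    (Φ : PowerSeries ℚ) (G : MvPowerSeries (Fin 2) ℚ) (d : Fin 2 →₀ ℕ) :
    MvPowerSeries.coeff d (phiComp Φ B * G)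
      = ∑ k ∈ range (deg d + 1),
          PowerSeries.coeff k Φ * MvPowerSeries.coeff d (B ^ k * G) := by
  rw [MvPowerSeries.coeff_mul]
  have key : ∀ p ∈ Finset.HasAntidiagonal.antidiagonal d,
      MvPowerSeries.coeff p.1 (phiComp Φ B) * MvPowerSeries.coeff p.2 G
      = ∑ k ∈ range (deg d + 1),
          PowerSeries.coeff k Φ
            * (MvPowerSeries.coeff p.1 (B ^ k) * MvPowerSeries.coeff p.2 G) := by
    intro p hp
    rw [Finset.HasAntidiagonal.mem_antidiagonal] at hp
    have hle : deg p.1 ≤ deg d := by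
      have h3 : deg p.1 + deg p.2 = deg d := by rw [← deg_add, hp]
      omega
    have hco : MvPowerSeries.coeff p.1 (phiComp Φ B)
        = ∑ k ∈ range (deg p.1 + 1),
            PowerSeries.coeff k Φ * MvPowerSeries.coeff p.1 (B ^ k) := rfl
    rw [hco, Finset.sum_mul,
      Finset.sum_subset (range_subset_range.2 (by omega : deg p.1 + 1 ≤ deg d + 1))]
    · exact Finset.sum_congr rfl fun k _ => by ring
    · intro k hk hk'
      simp only [mem_range] at hk hk'
      rw [coeff_pow_eq_zero hB k p.1 (by omega), mul_zero, zero_mul]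
  rw [Finset.sum_congr rfl key, Finset.sum_comm]
  refine Finset.sum_congr rfl fun k _ => ?_
  rw [← Finset.mul_sum, MvPowerSeries.coeff_mul]

lemma coeff_phiComp_pow_mul (hB : MvPowerSeries.constantCoeff B = 0)
    (Φ : PowerSeries ℚ) (α : ℕ) :
    ∀ (G : MvPowerSeries (Fin 2) ℚ) (d : Fin 2 →₀ ℕ),
    MvPowerSeries.coeff d ((phiComp Φ B) ^ α * G)
      = ∑ k ∈ range (deg d + 1),
          PowerSeries.coeff k (Φ ^ α) * MvPowerSeries.coeff d (B ^ k * G) := by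
  induction α with
  | zero =>
    intro G d
    rw [pow_zero, one_mul, Finset.sum_eq_single 0]
    · rw [pow_zero, pow_zero, one_mul]
      simp [PowerSeries.coeff_one]
    · intro b _ hb
      rw [pow_zero, PowerSeries.coeff_one, if_neg hb, zero_mul]
    · intro h; exact absurd (mem_range.2 (Nat.succ_pos _)) h
  | succ α ih =>
    intro G d
    have h1 : (phiComp Φ B) ^ (α + 1) * G = phiComp Φ B * ((phiComp Φ B) ^ α * G) := by ring
    rw [h1, coeff_phiComp_mul hB]
    have h2 : ∀ k ∈ range (deg d + 1),
        PowerSeries.coeff k Φ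
          * MvPowerSeries.coeff d (B ^ k * ((phiComp Φ B) ^ α * G))
        = ∑ j ∈ range (deg d + 1),
            PowerSeries.coeff k Φ * PowerSeries.coeff j (Φ ^ α)
              * MvPowerSeries.coeff d (B ^ (k + j) * G) := by
      intro k _
      have h3 : B ^ k * ((phiComp Φ B) ^ α * G) = (phiComp Φ B) ^ α * (B ^ k * G) := by ring
      rw [h3, ih (B ^ k * G) d, Finset.mul_sum]
      refine Finset.sum_congr rfl fun j _ => ?_
      have h4 : B ^ j * (B ^ k * G) = B ^ (k + j) * G := by rw [pow_add]; ring
      rw [h4]; ring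
    rw [Finset.sum_congr rfl h2]
    rw [triangle (deg d + 1)
      (fun k j => PowerSeries.coeff k Φ * PowerSeries.coeff j (Φ ^ α)
        * MvPowerSeries.coeff d (B ^ (k + j) * G))
      (fun k j hkj => mul_eq_zero_of_right _ (coeff_pow_mul_eq_zero hB G (by omega)))]
    refine Finset.sum_congr rfl fun r hr => ?_
    rw [pow_succ', PowerSeries.coeff_mul, Finset.sum_mul]
    refine Finset.sum_congr rfl fun p hp => ?_
    rw [Finset.HasAntidiagonal.mem_antidiagonal] at hp
    rw [hp]


lemma coeffZ_natSub {b m : ℕ} (h : b ≤ m) (f : PowerSeries ℚ) :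
    coeffZ ((m : ℤ) - b) f = PowerSeries.coeff (m - b) f := by
  have h1 : (m : ℤ) - b = ((m - b : ℕ) : ℤ) := by omega
  rw [coeffZ, h1, if_pos (by positivity), Int.toNat_natCast]

lemma coeffZ_neg {k : ℤ} (h : k < 0) (f : PowerSeries ℚ) : coeffZ k f = 0 := by
  rw [coeffZ, if_neg (by omega)]

/-- convolution identity C1 -/
lemma conv1 (Φ : PowerSeries ℚ) (a b M K : ℕ) (hK : M < K) :
    ∑ k ∈ range K, PowerSeries.coeff k (Φ ^ a) * coeffZ ((M : ℤ) - k) (Φ ^ b)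
      = PowerSeries.coeff M (Φ ^ (a + b)) := by
  rw [← Finset.sum_subset (range_subset_range.2 (by omega : M + 1 ≤ K))
    (fun k _ hk => by
      rw [coeffZ_neg (by simp only [mem_range] at hk ⊢; omega), mul_zero])]
  have h1 : ∀ k ∈ range (M + 1),
      PowerSeries.coeff k (Φ ^ a) * coeffZ ((M : ℤ) - k) (Φ ^ b)
      = PowerSeries.coeff k (Φ ^ a) * PowerSeries.coeff (M - k) (Φ ^ b) := by
    intro k hk
    rw [coeffZ_natSub (by simp only [mem_range] at hk; omega)]
  rw [Finset.sum_congr rfl h1, pow_add, PowerSeries.coeff_mul,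
    Finset.Nat.sum_antidiagonal_eq_sum_range_succ_mk]

/-- convolution identity C2 (uses derivatives) -/
lemma conv2 (Φ : PowerSeries ℚ) (a b M K : ℕ) (hK : M < K) (hab : 1 ≤ a + b) :
    ∑ k ∈ range K, (k : ℚ) * PowerSeries.coeff k (Φ ^ a) * coeffZ ((M : ℤ) - k) (Φ ^ b)
      = (a : ℚ) * M / (a + b) * PowerSeries.coeff M (Φ ^ (a + b)) := by
  rcases Nat.eq_zero_or_pos a with rfl | ha
  · simp only [pow_zero, PowerSeries.coeff_one, Nat.cast_zero, zero_mul, zero_div]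
    rw [Finset.sum_eq_zero]
    intro k _
    by_cases hk : k = 0
    · rw [hk]; norm_num
    · rw [if_neg hk]; ring
  rcases Nat.eq_zero_or_pos M with rfl | hM
  · rw [Finset.sum_eq_zero]
    · norm_num
    · intro k hk
      by_cases hk0 : k = 0
      · rw [hk0]; norm_num
      · rw [coeffZ_neg (show ((0 : ℕ) : ℤ) - (k : ℕ) < 0 by push_cast; omega), mul_zero]
  -- main case: a ≥ 1, M ≥ 1
  have key : ((a + b : ℕ) : PowerSeries ℚ) * (PowerSeries.derivative ℚ (Φ ^ a) * Φ ^ b)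
      = (a : PowerSeries ℚ) * PowerSeries.derivative ℚ (Φ ^ (a + b)) := by
    rw [Derivation.leibniz_pow, Derivation.leibniz_pow]
    have hpow : Φ ^ (a - 1) * Φ ^ b = Φ ^ (a + b - 1) := by
      rw [← pow_add]; congr 1; omega
    simp only [smul_smul, nsmul_eq_mul, smul_eq_mul]
    rw [← hpow]
    push_cast
    ring
  -- take coefficient M - 1 of both sides of key
  have hco := congrArg (PowerSeries.coeff (M - 1)) key
  have hnat : ∀ (c : ℕ) (f : PowerSeries ℚ) (j : ℕ),
      PowerSeries.coeff j ((c : PowerSeries ℚ) * f) = (c : ℚ) * PowerSeries.coeff j f := by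
    intro c f j
    rw [← map_natCast (PowerSeries.C) c, PowerSeries.coeff_C_mul]
  rw [hnat, hnat] at hco
  have hder : PowerSeries.coeff (M - 1) (PowerSeries.derivative ℚ (Φ ^ (a + b)))
      = PowerSeries.coeff M (Φ ^ (a + b)) * M := by
    rw [PowerSeries.coeff_derivative, show M - 1 + 1 = M from by omega]
    congr 1
    have h1 : ((M - 1 : ℕ) : ℚ) = (M : ℚ) - 1 := by
      push_cast [Nat.cast_sub hM]; ring
    rw [h1]; ring
  rw [hder] at hco
  -- now compute the sum as coeff (M-1) of the product
  have hsum : ∑ k ∈ range K, (k : ℚ) * PowerSeries.coeff k (Φ ^ a) * coeffZ ((M : ℤ) - k) (Φ ^ b)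
      = PowerSeries.coeff (M - 1) (PowerSeries.derivative ℚ (Φ ^ a) * Φ ^ b) := by
    rw [← Finset.sum_subset (range_subset_range.2 (by omega : M + 1 ≤ K))
      (fun k hk' hk => by
        rw [coeffZ_neg (by simp only [mem_range] at hk ⊢; omega), mul_zero])]
    have h1 : ∀ k ∈ range (M + 1),
        (k : ℚ) * PowerSeries.coeff k (Φ ^ a) * coeffZ ((M : ℤ) - k) (Φ ^ b)
        = (k : ℚ) * PowerSeries.coeff k (Φ ^ a) * PowerSeries.coeff (M - k) (Φ ^ b) := by
      intro k hk
      rw [coeffZ_natSub (by simp only [mem_range] at hk; omega)]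
    rw [Finset.sum_congr rfl h1, PowerSeries.coeff_mul,
      Finset.Nat.sum_antidiagonal_eq_sum_range_succ_mk,
      show (M - 1).succ = M from by omega, Finset.sum_range_succ' _ M]
    simp only [Nat.cast_zero, zero_mul, add_zero]
    refine Finset.sum_congr rfl fun k hk => ?_
    rw [PowerSeries.coeff_derivative, show M - 1 - k = M - (k + 1) from by omega]
    push_cast
    ring
  rw [hsum]
  have habQ : (0 : ℚ) < (a : ℚ) + b := by
    have h1 : (0 : ℚ) < (a : ℚ) := by exact_mod_cast ha
    have h2 : (0 : ℚ) ≤ (b : ℚ) := by positivity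
    linarith
  have hco' : ((a : ℚ) + b) * PowerSeries.coeff (M - 1) (PowerSeries.derivative ℚ (Φ ^ a) * Φ ^ b)
      = (a : ℚ) * (PowerSeries.coeff M (Φ ^ (a + b)) * M) := by
    rw [← hco]; push_cast; ring
  rw [div_mul_eq_mul_div, eq_div_iff (ne_of_gt habQ)]
  linear_combination hco'


lemma coeff_X_mul_of_zero {i : Fin 2} {f : MvPowerSeries (Fin 2) ℚ} {d : Fin 2 →₀ ℕ}
    (h : d i = 0) : MvPowerSeries.coeff d (MvPowerSeries.X i * f) = 0 := by
  rw [show (MvPowerSeries.X i : MvPowerSeries (Fin 2) ℚ)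
      = MvPowerSeries.monomial (Finsupp.single i 1) 1 from rfl,
    MvPowerSeries.coeff_monomial_mul, if_neg]
  intro hle
  have h1 := hle i
  rw [Finsupp.single_apply, if_pos rfl, h] at h1
  omega

lemma coeff_A_mul (hA : A = MvPowerSeries.X 0 * phiComp Φ B) (j : ℕ)
    (G : MvPowerSeries (Fin 2) ℚ) : MvPowerSeries.coeff (e 0 j) (A * G) = 0 := by
  rw [hA, mul_assoc]
  exact coeff_X_mul_of_zero (e_apply_zero 0 j)

lemma coeff_B_mul (hB : B = MvPowerSeries.X 1 * phiComp Ψ A) (i : ℕ)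
    (G : MvPowerSeries (Fin 2) ℚ) : MvPowerSeries.coeff (e i 0) (B * G) = 0 := by
  rw [hB, mul_assoc]
  exact coeff_X_mul_of_zero (e_apply_one i 0)

lemma coeff_Apow_mul (hA : A = MvPowerSeries.X 0 * phiComp Φ B) {l : ℕ} (hl : 1 ≤ l) (j : ℕ)
    (G : MvPowerSeries (Fin 2) ℚ) : MvPowerSeries.coeff (e 0 j) (A ^ l * G) = 0 := by
  obtain ⟨l', rfl⟩ : ∃ l', l = l' + 1 := ⟨l - 1, by omega⟩
  rw [show A ^ (l' + 1) * G = A * (A ^ l' * G) from by ring]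
  exact coeff_A_mul hA j _

lemma coeff_Bpow_mul (hB : B = MvPowerSeries.X 1 * phiComp Ψ A) {k : ℕ} (hk : 1 ≤ k) (i : ℕ)
    (G : MvPowerSeries (Fin 2) ℚ) : MvPowerSeries.coeff (e i 0) (B ^ k * G) = 0 := by
  obtain ⟨k', rfl⟩ : ∃ k', k = k' + 1 := ⟨k - 1, by omega⟩
  rw [show B ^ (k' + 1) * G = B * (B ^ k' * G) from by ring]
  exact coeff_B_mul hB i _

lemma coeff_Vpow (hA : A = MvPowerSeries.X 0 * phiComp Φ B)
    (hcA : MvPowerSeries.constantCoeff A = 0) (Ψ : PowerSeries ℚ) (k j : ℕ)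
    (G : MvPowerSeries (Fin 2) ℚ) :
    MvPowerSeries.coeff (e 0 j) ((phiComp Ψ A) ^ k * G)
      = (PowerSeries.constantCoeff Ψ) ^ k * MvPowerSeries.coeff (e 0 j) G := by
  rw [coeff_phiComp_pow_mul hcA Ψ k G (e 0 j), Finset.sum_eq_single 0]
  · rw [pow_zero, one_mul, ← map_pow, ← PowerSeries.coeff_zero_eq_constantCoeff_apply]
  · intro l _ hl
    rw [coeff_Apow_mul hA (by omega) j G, mul_zero]
  · intro h; exact absurd (mem_range.2 (Nat.succ_pos _)) h

lemma coeff_Upow (hB : B = MvPowerSeries.X 1 * phiComp Ψ A)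
    (hcB : MvPowerSeries.constantCoeff B = 0) (Φ : PowerSeries ℚ) (l i : ℕ)
    (G : MvPowerSeries (Fin 2) ℚ) :
    MvPowerSeries.coeff (e i 0) ((phiComp Φ B) ^ l * G)
      = (PowerSeries.constantCoeff Φ) ^ l * MvPowerSeries.coeff (e i 0) G := by
  rw [coeff_phiComp_pow_mul hcB Φ l G (e i 0), Finset.sum_eq_single 0]
  · rw [pow_zero, one_mul, ← map_pow, ← PowerSeries.coeff_zero_eq_constantCoeff_apply]
  · intro k _ hk
    rw [coeff_Bpow_mul hB (by omega) i G, mul_zero]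
  · intro h; exact absurd (mem_range.2 (Nat.succ_pos _)) h

lemma prod_eq_monomial_mul (hA : A = MvPowerSeries.X 0 * phiComp Φ B)
    (hB : B = MvPowerSeries.X 1 * phiComp Ψ A) (α β : ℕ) :
    A ^ α * B ^ β = MvPowerSeries.monomial (e α β) 1
      * ((phiComp Φ B) ^ α * (phiComp Ψ A) ^ β) := by
  have h2 : (MvPowerSeries.X 0 * phiComp Φ B) ^ α * (MvPowerSeries.X 1 * phiComp Ψ A) ^ β
      = MvPowerSeries.monomial (e α β) 1 * ((phiComp Φ B) ^ α * (phiComp Ψ A) ^ β) := by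
    rw [mul_pow, mul_pow, MvPowerSeries.X_pow_eq, MvPowerSeries.X_pow_eq,
      show ∀ f g u v : MvPowerSeries (Fin 2) ℚ, f * u * (g * v) = f * g * (u * v) from
        fun _ _ _ _ => by ring,
      MvPowerSeries.monomial_mul_monomial, one_mul]
    rfl
  rw [← h2, ← hA, ← hB]

lemma coeff_reduce (hA : A = MvPowerSeries.X 0 * phiComp Φ B)
    (hB : B = MvPowerSeries.X 1 * phiComp Ψ A) {α β n m : ℕ} (hα : α ≤ n) (hβ : β ≤ m) :
    MvPowerSeries.coeff (e n m) (A ^ α * B ^ β)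
      = MvPowerSeries.coeff (e (n - α) (m - β)) ((phiComp Φ B) ^ α * (phiComp Ψ A) ^ β) := by
  rw [prod_eq_monomial_mul hA hB, MvPowerSeries.coeff_monomial_mul,
    if_pos (e_le_e.2 ⟨hα, hβ⟩), one_mul, e_sub_e]

lemma coeff_vanish (hA : A = MvPowerSeries.X 0 * phiComp Φ B)
    (hB : B = MvPowerSeries.X 1 * phiComp Ψ A) {α β n m : ℕ} (h : n < α ∨ m < β) :
    MvPowerSeries.coeff (e n m) (A ^ α * B ^ β) = 0 := by
  rw [prod_eq_monomial_mul hA hB, MvPowerSeries.coeff_monomial_mul, if_neg]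
  intro hle
  rcases e_le_e.1 hle with ⟨h1, h2⟩
  omega

lemma coeff_expand (hcA : MvPowerSeries.constantCoeff A = 0)
    (hcB : MvPowerSeries.constantCoeff B = 0) (Φ Ψ : PowerSeries ℚ) (α β : ℕ)
    (d : Fin 2 →₀ ℕ) :
    MvPowerSeries.coeff d ((phiComp Φ B) ^ α * (phiComp Ψ A) ^ β)
      = ∑ k ∈ range (deg d + 1), PowerSeries.coeff k (Φ ^ α)
          * ∑ l ∈ range (deg d + 1), PowerSeries.coeff l (Ψ ^ β)
              * MvPowerSeries.coeff d (A ^ l * B ^ k) := by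
  rw [coeff_phiComp_pow_mul hcB Φ α _ d]
  refine Finset.sum_congr rfl fun k _ => ?_
  congr 1
  rw [mul_comm (B ^ k), coeff_phiComp_pow_mul hcA Ψ β _ d]

lemma sum_helper (R R' : Finset ℕ) (f f' g g' : ℕ → ℚ) (c1 c2 c3 : ℚ) :
    ∑ k ∈ R, ∑ l ∈ R', (c1 * (f k * g l) + c2 * (f' k * g' l) - c3 * (f k * g' l))
      = c1 * ((∑ k ∈ R, f k) * (∑ l ∈ R', g l))
        + c2 * ((∑ k ∈ R, f' k) * (∑ l ∈ R', g' l))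
        - c3 * ((∑ k ∈ R, f k) * (∑ l ∈ R', g' l)) := by
  rw [Finset.sum_mul_sum, Finset.sum_mul_sum, Finset.sum_mul_sum, Finset.mul_sum, Finset.mul_sum,
    Finset.mul_sum, ← Finset.sum_add_distrib, ← Finset.sum_sub_distrib]
  refine Finset.sum_congr rfl fun k _ => ?_
  rw [Finset.mul_sum, Finset.mul_sum, Finset.mul_sum, ← Finset.sum_add_distrib,
    ← Finset.sum_sub_distrib]

end Main

end Chottin

open Chottin Finset in
/-- Chottin formula: if A = x·Φ(B) and B = y·Ψ(A), then for
α, β ≥ 0 and n, m ≥ 1,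
[xⁿyᵐ] A^α B^β = (1 − (n−α)(m−β)/(nm))·[t^{m−β}]Φⁿ·[s^{n−α}]Ψᵐ. -/
theorem stmt_6 (A B : MvPowerSeries (Fin 2) ℚ) (Φ Ψ : PowerSeries ℚ)
    (hA : A = MvPowerSeries.X 0 * phiComp Φ B)
    (hB : B = MvPowerSeries.X 1 * phiComp Ψ A)
    (α β n m : ℕ) (hn : 1 ≤ n) (hm : 1 ≤ m) :
    MvPowerSeries.coeff (Finsupp.single 0 n + Finsupp.single 1 m) (A ^ α * B ^ β) =
      (1 - (((n : ℚ) - α) * ((m : ℚ) - β)) / ((n : ℚ) * m)) *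
        coeffZ ((m : ℤ) - β) (Φ ^ n) * coeffZ ((n : ℤ) - α) (Ψ ^ m) := by
  have hcA : MvPowerSeries.constantCoeff A = 0 := by
    rw [hA, map_mul, MvPowerSeries.constantCoeff_X, zero_mul]
  have hcB : MvPowerSeries.constantCoeff B = 0 := by
    rw [hB, map_mul, MvPowerSeries.constantCoeff_X, zero_mul]
  have key : ∀ N : ℕ, ∀ α β n m : ℕ, 1 ≤ n → 1 ≤ m → n + m ≤ N →
      MvPowerSeries.coeff (e n m) (A ^ α * B ^ β) =
      (1 - (((n : ℚ) - α) * ((m : ℚ) - β)) / ((n : ℚ) * m)) *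
        coeffZ ((m : ℤ) - β) (Φ ^ n) * coeffZ ((n : ℤ) - α) (Ψ ^ m) := by
    intro N
    induction N with
    | zero => intro α β n m hn hm hN; omega
    | succ N ih =>
      intro α β n m hn hm hN
      have hnQ : (n : ℚ) ≠ 0 := Nat.cast_ne_zero.2 (by omega)
      have hmQ : (m : ℚ) ≠ 0 := Nat.cast_ne_zero.2 (by omega)
      by_cases hαn : n < α
      · rw [coeff_vanish hA hB (Or.inl hαn),
          coeffZ_neg (show (n : ℤ) - α < 0 by omega), mul_zero]
      by_cases hβm : m < β
      · rw [coeff_vanish hA hB (Or.inr hβm),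
          coeffZ_neg (show (m : ℤ) - β < 0 by omega), mul_zero, zero_mul]
      push_neg at hαn hβm
      by_cases hz : α = 0 ∧ β = 0
      · obtain ⟨rfl, rfl⟩ := hz
        rw [pow_zero, pow_zero, one_mul, MvPowerSeries.coeff_one,
          if_neg (fun h => by rcases e_eq_zero_iff.1 h with ⟨h1, h2⟩; omega),
          show (1 - (((n : ℚ) - (0 : ℕ)) * ((m : ℚ) - (0 : ℕ))) / ((n : ℚ) * m)) = 0 from by
            rw [Nat.cast_zero, sub_zero, sub_zero, div_self (mul_ne_zero hnQ hmQ), sub_self],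
          zero_mul, zero_mul]
      by_cases hcase1 : α = n
      · subst hcase1
        -- boundary case: α = n
        rw [coeff_reduce hA hB le_rfl hβm, Nat.sub_self,
          coeff_expand hcA hcB Φ Ψ α β (e 0 (m - β))]
        have hBk : ∀ k, MvPowerSeries.coeff (e 0 (m - β)) (B ^ k)
            = if k = m - β then (PowerSeries.constantCoeff Ψ) ^ (m - β) else 0 := by
          intro k
          conv_lhs => rw [hB]
          rw [mul_pow, MvPowerSeries.X_pow_eq,
            show Finsupp.single (1 : Fin 2) k = e 0 k from by simp [e],
            MvPowerSeries.coeff_monomial_mul]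
          by_cases hk : k ≤ m - β
          · rw [if_pos (e_le_e.2 ⟨Nat.zero_le _, hk⟩), one_mul, e_sub_e,
              ← mul_one ((phiComp Ψ A) ^ k), coeff_Vpow hA hcA Ψ k _ 1,
              MvPowerSeries.coeff_one]
            by_cases hk2 : k = m - β
            · rw [if_pos (e_eq_zero_iff.2 ⟨rfl, by omega⟩), if_pos hk2, mul_one, hk2]
            · rw [if_neg (fun h => hk2 (by rcases e_eq_zero_iff.1 h with ⟨_, h2⟩; omega)),
                if_neg hk2, mul_zero]
          · rw [if_neg (fun h => hk (e_le_e.1 h).2), if_neg (by omega)]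
        have hinner : ∀ k, ∑ l ∈ range (deg (e 0 (m - β)) + 1),
            PowerSeries.coeff l (Ψ ^ β)
              * MvPowerSeries.coeff (e 0 (m - β)) (A ^ l * B ^ k)
            = PowerSeries.coeff 0 (Ψ ^ β) * MvPowerSeries.coeff (e 0 (m - β)) (B ^ k) := by
          intro k
          rw [Finset.sum_eq_single 0]
          · rw [pow_zero, one_mul]
          · intro l _ hl
            rw [coeff_Apow_mul hA (by omega) _ (B ^ k), mul_zero]
          · intro h; exact absurd (mem_range.2 (Nat.succ_pos _)) h
        rw [Finset.sum_congr rfl (fun k _ => by rw [hinner k, hBk k]),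
          Finset.sum_eq_single (m - β)]
        · rw [if_pos rfl, sub_self, zero_mul, zero_div, sub_zero, one_mul,
            coeffZ_natSub hβm, coeffZ_natSub le_rfl, Nat.sub_self,
            PowerSeries.coeff_zero_eq_constantCoeff_apply,
            PowerSeries.coeff_zero_eq_constantCoeff_apply,
            map_pow (PowerSeries.constantCoeff) Ψ β,
            map_pow (PowerSeries.constantCoeff) Ψ m]
          have hψ : (PowerSeries.constantCoeff) Ψ ^ β
                * (PowerSeries.constantCoeff) Ψ ^ (m - β)
              = (PowerSeries.constantCoeff) Ψ ^ m := by
            rw [← pow_add]; congr 1; omega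
          rw [← hψ]
        · intro k _ hk
          rw [if_neg hk, mul_zero, mul_zero]
        · intro h
          exact absurd (mem_range.2 (by rw [deg_e]; omega)) h
      by_cases hcase2 : β = m
      · subst hcase2
        -- boundary case: β = m
        have hαn' : α < n := by omega
        rw [coeff_reduce hA hB hαn le_rfl, Nat.sub_self,
          coeff_expand hcA hcB Φ Ψ α β (e (n - α) 0)]
        have hAl : ∀ l, MvPowerSeries.coeff (e (n - α) 0) (A ^ l)
            = if l = n - α then (PowerSeries.constantCoeff Φ) ^ (n - α) else 0 := by
          intro l
          conv_lhs => rw [hA]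
          rw [mul_pow, MvPowerSeries.X_pow_eq,
            show Finsupp.single (0 : Fin 2) l = e l 0 from by simp [e],
            MvPowerSeries.coeff_monomial_mul]
          by_cases hl : l ≤ n - α
          · rw [if_pos (e_le_e.2 ⟨hl, Nat.zero_le _⟩), one_mul, e_sub_e,
              ← mul_one ((phiComp Φ B) ^ l), coeff_Upow hB hcB Φ l _ 1,
              MvPowerSeries.coeff_one]
            by_cases hl2 : l = n - α
            · rw [if_pos (e_eq_zero_iff.2 ⟨by omega, rfl⟩), if_pos hl2, mul_one, hl2]
            · rw [if_neg (fun h => hl2 (by rcases e_eq_zero_iff.1 h with ⟨h1, _⟩; omega)),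
                if_neg hl2, mul_zero]
          · rw [if_neg (fun h => hl (e_le_e.1 h).1), if_neg (by omega)]
        rw [Finset.sum_eq_single 0]
        · have hinner2 : ∀ l ∈ range (deg (e (n - α) 0) + 1),
              PowerSeries.coeff l (Ψ ^ β)
                * MvPowerSeries.coeff (e (n - α) 0) (A ^ l * B ^ 0)
              = PowerSeries.coeff l (Ψ ^ β)
                * (if l = n - α then (PowerSeries.constantCoeff Φ) ^ (n - α) else 0) := by
            intro l _
            rw [pow_zero, mul_one, hAl l]
          rw [Finset.sum_congr rfl hinner2, Finset.sum_eq_single (n - α)]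
          · rw [if_pos rfl, sub_self, mul_zero, zero_div, sub_zero, one_mul,
              coeffZ_natSub le_rfl, Nat.sub_self, coeffZ_natSub hαn,
              PowerSeries.coeff_zero_eq_constantCoeff_apply,
              PowerSeries.coeff_zero_eq_constantCoeff_apply,
              map_pow (PowerSeries.constantCoeff) Φ α,
              map_pow (PowerSeries.constantCoeff) Φ n]
            have hφ : (PowerSeries.constantCoeff) Φ ^ α
                  * (PowerSeries.constantCoeff) Φ ^ (n - α)
                = (PowerSeries.constantCoeff) Φ ^ n := by
              rw [← pow_add]; congr 1; omega
            rw [← hφ]; ring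
          · intro l _ hl
            rw [if_neg hl, mul_zero]
          · intro h
            exact absurd (mem_range.2 (by rw [deg_e]; omega)) h
        · intro k _ hk
          rw [Finset.sum_eq_zero, mul_zero]
          intro l _
          rw [show A ^ l * B ^ k = B ^ k * A ^ l from mul_comm _ _,
            coeff_Bpow_mul hB (by omega) _ (A ^ l), mul_zero]
        · intro h
          exact absurd (mem_range.2 (Nat.succ_pos _)) h
      -- main case
      · have hαn' : α < n := by omega
        have hβm' : β < m := by omega
        have hab1 : 1 ≤ α + β := by omega
        have hN' : (n - α) + (m - β) ≤ N := by omega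
        have hn'Q : ((n - α : ℕ) : ℚ) ≠ 0 := Nat.cast_ne_zero.2 (by omega)
        have hm'Q : ((m - β : ℕ) : ℚ) ≠ 0 := Nat.cast_ne_zero.2 (by omega)
        rw [coeff_reduce hA hB hαn hβm, coeff_expand hcA hcB Φ Ψ α β (e (n - α) (m - β)),
          deg_e]
        have hw : ∀ l k : ℕ, MvPowerSeries.coeff (e (n - α) (m - β)) (A ^ l * B ^ k)
            = (1 - ((((n - α : ℕ) : ℚ) - l) * (((m - β : ℕ) : ℚ) - k))
                / (((n - α : ℕ) : ℚ) * ((m - β : ℕ) : ℚ))) *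
              coeffZ (((m - β : ℕ) : ℤ) - k) (Φ ^ (n - α))
                * coeffZ (((n - α : ℕ) : ℤ) - l) (Ψ ^ (m - β)) :=
          fun l k => ih l k (n - α) (m - β) (by omega) (by omega) hN'
        have step : ∑ k ∈ range (n - α + (m - β) + 1), PowerSeries.coeff k (Φ ^ α)
              * ∑ l ∈ range (n - α + (m - β) + 1), PowerSeries.coeff l (Ψ ^ β)
                  * MvPowerSeries.coeff (e (n - α) (m - β)) (A ^ l * B ^ k)
            = ∑ k ∈ range (n - α + (m - β) + 1), ∑ l ∈ range (n - α + (m - β) + 1),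
                ((1 / ((m - β : ℕ) : ℚ))
                    * (((k : ℚ) * PowerSeries.coeff k (Φ ^ α)
                          * coeffZ (((m - β : ℕ) : ℤ) - k) (Φ ^ (n - α)))
                      * (PowerSeries.coeff l (Ψ ^ β)
                          * coeffZ (((n - α : ℕ) : ℤ) - l) (Ψ ^ (m - β))))
                  + (1 / ((n - α : ℕ) : ℚ))
                    * ((PowerSeries.coeff k (Φ ^ α)
                          * coeffZ (((m - β : ℕ) : ℤ) - k) (Φ ^ (n - α)))
                      * ((l : ℚ) * PowerSeries.coeff l (Ψ ^ β)
                          * coeffZ (((n - α : ℕ) : ℤ) - l) (Ψ ^ (m - β))))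
                  - (1 / (((n - α : ℕ) : ℚ) * ((m - β : ℕ) : ℚ)))
                    * (((k : ℚ) * PowerSeries.coeff k (Φ ^ α)
                          * coeffZ (((m - β : ℕ) : ℤ) - k) (Φ ^ (n - α)))
                      * ((l : ℚ) * PowerSeries.coeff l (Ψ ^ β)
                          * coeffZ (((n - α : ℕ) : ℤ) - l) (Ψ ^ (m - β))))) := by
          have hscal : ∀ a b x y : ℚ, a ≠ 0 → b ≠ 0 →
              1 - (a - y) * (b - x) / (a * b) = x / b + y / a - x * y / (a * b) := by
            intro a b x y ha hb
            field_simp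
            ring
          refine Finset.sum_congr rfl fun k _ => ?_
          rw [Finset.mul_sum]
          refine Finset.sum_congr rfl fun l _ => ?_
          rw [hw l k, hscal _ _ _ _ hn'Q hm'Q]
          ring
        rw [step, sum_helper,
          conv2 Φ α (n - α) (m - β) _ (by omega) (by omega),
          conv1 Φ α (n - α) (m - β) _ (by omega),
          conv1 Ψ β (m - β) (n - α) _ (by omega),
          conv2 Ψ β (m - β) (n - α) _ (by omega) (by omega),
          show α + (n - α) = n from by omega, show β + (m - β) = m from by omega,
          coeffZ_natSub hβm, coeffZ_natSub hαn, Nat.cast_sub hαn, Nat.cast_sub hβm]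
        have hnsub : (n : ℚ) - α ≠ 0 := by
          have : (α : ℚ) < n := by exact_mod_cast hαn'
          exact sub_ne_zero.2 (ne_of_gt this)
        have hmsub : (m : ℚ) - β ≠ 0 := by
          have : (β : ℚ) < m := by exact_mod_cast hβm'
          exact sub_ne_zero.2 (ne_of_gt this)
        field_simp
        have h1 : (n : ℚ) * (n : ℚ)⁻¹ = 1 := mul_inv_cancel₀ hnQ
        have h2 : (m : ℚ) * (m : ℚ)⁻¹ = 1 := mul_inv_cancel₀ hmQ
        linear_combination ((m : ℚ) * PowerSeries.coeff (m - β) (Φ ^ n) * PowerSeries.coeff (n - α) (Ψ ^ m) * α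
            - PowerSeries.coeff (m - β) (Φ ^ n) * PowerSeries.coeff (n - α) (Ψ ^ m) * α * β * m * (m : ℚ)⁻¹) * h1
          + ((n : ℚ) * PowerSeries.coeff (m - β) (Φ ^ n) * PowerSeries.coeff (n - α) (Ψ ^ m) * β
            - PowerSeries.coeff (m - β) (Φ ^ n) * PowerSeries.coeff (n - α) (Ψ ^ m) * α * β) * h2
  exact key (n + m) α β n m hn hm le_rfl
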